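/- ∑_{k=0}^∞ (5/2)_k^3 / [(k!)^2 · (k+2)!] · (6k+5)/4^k = 256/(3π). -/

import Mathlib

/-- The Pochhammer symbol `(x)ₖ = x (x+1) ⋯ (x+k-1)`, with `(x)₀ = 1`. -/
noncomputable def poch (x : ℝ) (k : ℕ) : ℝ :=
  ∏ i ∈ Finset.range k, (x + i)

namespace Thm1WZ

open Filter Finset

/-- `u n = C(2n,n)/4^n` as a product. -/
noncomputable def u (n : ℕ) : ℝ := ∏ i ∈ Finset.range n, (2*(i:ℝ)+1)/(2*i+2)

lemma u_zero : u 0 = 1 := by simp [u]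

lemma u_succ (n : ℕ) : u (n+1) = u n * ((2*(n:ℝ)+1)/(2*n+2)) :=
  Finset.prod_range_succ _ n

lemma u_pos (n : ℕ) : 0 < u n :=
  Finset.prod_pos (fun i _ => by positivity)

lemma u_le_one (n : ℕ) : u n ≤ 1 := by
  apply Finset.prod_le_one
  · intro i _; positivity
  · intro i _
    rw [div_le_one (by positivity)]
    linarith

lemma u_sq_bound (k : ℕ) : (2*(k:ℝ)+1) * u k ^ 2 ≤ 1 := by
  induction k with
  | zero => simp [u_zero]
  | succ k ih =>
    rw [u_succ]
    have h1 : (0:ℝ) < 2*(k:ℝ)+2 := by positivity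
    have h2 : (0:ℝ) ≤ u k ^ 2 := sq_nonneg _
    push_cast
    rw [show (2*((k:ℝ)+1)+1) = 2*(k:ℝ)+3 from by ring]
    have key : (2*(k:ℝ)+3) * (u k * ((2*k+1)/(2*k+2)))^2
        = ((2*k+1) * u k ^2) * ((2*k+1)*(2*k+3)/(2*k+2)^2) := by
      field_simp
    rw [key]
    have hle : (2*(k:ℝ)+1)*(2*k+3)/(2*k+2)^2 ≤ 1 := by
      rw [div_le_one (by positivity)]; nlinarith
    have h3 : (0:ℝ) ≤ (2*(k:ℝ)+1) * u k ^2 := by positivity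
    nlinarith


/-- The WZ kernel. -/
noncomputable def H (n k : ℕ) : ℝ :=
  u n ^ 3 * u k ^ 2 * ((n.factorial : ℝ) * k.factorial / (n + k).factorial) ^ 2 / 4 ^ n

lemma fact_pos (n : ℕ) : (0:ℝ) < n.factorial :=
  Nat.cast_pos.mpr n.factorial_pos

lemma H_pos (n k : ℕ) : 0 < H n k := by
  unfold H
  have h1 := u_pos n; have h2 := u_pos k
  have h3 := fact_pos n; have h4 := fact_pos k; have h5 := fact_pos (n+k)
  positivity

lemma beta_le_one (n k : ℕ) : (n.factorial : ℝ) * k.factorial / (n + k).factorial ≤ 1 := by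
  rw [div_le_one (fact_pos _)]
  have := Nat.le_of_dvd (n+k).factorial_pos (Nat.factorial_mul_factorial_dvd_factorial_add n k)
  exact_mod_cast this

lemma beta_le (n k : ℕ) :
    ((n+1).factorial : ℝ) * k.factorial / ((n+1) + k).factorial ≤ 1 / (k+1) := by
  rw [div_le_div_iff₀ (fact_pos _) (by positivity)]
  have hc : (k+1) * ((n+1).factorial * k.factorial) ≤ ((n+1) + k).factorial := by
    have h1 : ((n+1) + k).choose k * (n+1).factorial * k.factorial = ((n+1)+k).factorial :=
      Nat.add_choose_mul_factorial_mul_factorial (n+1) k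
    have h2 : k + 1 ≤ ((n+1) + k).choose k := by
      calc k + 1 = (k+1).choose k := (Nat.choose_succ_self_right k).symm
        _ ≤ ((n+1)+k).choose k := Nat.choose_le_choose k (by omega)
    calc (k+1) * ((n+1).factorial * k.factorial)
        ≤ ((n+1) + k).choose k * ((n+1).factorial * k.factorial) :=
          Nat.mul_le_mul_right _ h2
      _ = ((n+1)+k).factorial := by rw [← h1]; ring
  calc ((n+1).factorial : ℝ) * k.factorial * (k+1) = ((k+1 : ℕ) * ((n+1).factorial * k.factorial) : ℕ) := by
        push_cast; ring
    _ ≤ (((n+1) + k).factorial : ℕ) := by exact_mod_cast hc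
    _ = 1 * (((n+1)+k).factorial : ℝ) := by rw [one_mul]

lemma H_le (n k : ℕ) : H n k ≤ (1/4) ^ n := by
  unfold H
  rw [div_le_iff₀ (by positivity)]
  have h1 : u n ^ 3 ≤ 1 := pow_le_one₀ (le_of_lt (u_pos n)) (u_le_one n) |>.trans_eq rfl
  have h2 : u k ^ 2 ≤ 1 := pow_le_one₀ (le_of_lt (u_pos k)) (u_le_one k)
  have h3 : ((n.factorial : ℝ) * k.factorial / (n + k).factorial) ^ 2 ≤ 1 := by
    apply pow_le_one₀ (by positivity) (beta_le_one n k)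
  have h4 : (1/4:ℝ)^n * 4^n = 1 := by
    rw [← mul_pow]; norm_num
  nlinarith [u_pos n, u_pos k, pow_pos (u_pos n) 3, pow_pos (u_pos k) 2,
    sq_nonneg ((n.factorial : ℝ) * k.factorial / (n + k).factorial),
    pow_pos (show (0:ℝ) < 4 by norm_num) n,
    mul_pos (pow_pos (u_pos n) 3) (pow_pos (u_pos k) 2)]


lemma H_succ_right (n k : ℕ) :
    H n (k+1) = H n k * ((2*(k:ℝ)+1)^2 * ((k:ℝ)+1)^2 / ((2*(k:ℝ)+2)^2 * ((n:ℝ)+k+1)^2)) := by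
  unfold H
  have e1 : n + (k+1) = (n+k) + 1 := rfl
  rw [e1, Nat.factorial_succ (n+k), Nat.factorial_succ k, u_succ k]
  have h3 := fact_pos n; have h4 := fact_pos k; have h5 := fact_pos (n+k)
  have h6 : ((n:ℝ)+k+1) ≠ 0 := by positivity
  have h7 : (2*(k:ℝ)+2) ≠ 0 := by positivity
  have h8 : (4:ℝ)^n ≠ 0 := by positivity
  push_cast
  field_simp

lemma H_succ_left (n k : ℕ) :
    H (n+1) k = H n k * ((2*(n:ℝ)+1)^3 * ((n:ℝ)+1)^2 / (4 * (2*(n:ℝ)+2)^3 * ((n:ℝ)+k+1)^2)) := by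
  unfold H
  have e1 : (n+1) + k = (n+k) + 1 := by omega
  rw [e1, Nat.factorial_succ (n+k), Nat.factorial_succ n, u_succ n, pow_succ]
  have h3 := fact_pos n; have h4 := fact_pos k; have h5 := fact_pos (n+k)
  have h6 : ((n:ℝ)+k+1) ≠ 0 := by positivity
  have h7 : (2*(n:ℝ)+2) ≠ 0 := by positivity
  have h8 : (4:ℝ)^n ≠ 0 := by positivity
  push_cast
  field_simp
  ring

/-- The WZ / creative telescoping identity. -/
lemma wz (n k : ℕ) :
    (6*(n:ℝ)+4*k+5) * H n (k+1) - (6*(n:ℝ)+4*k+1) * H n k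
      = 8*((n:ℝ)+1) * H (n+1) k - 8*(n:ℝ) * H n k := by
  rw [H_succ_right, H_succ_left]
  have h6 : ((n:ℝ)+k+1) ≠ 0 := by positivity
  have h7 : (2*(n:ℝ)+2) ≠ 0 := by positivity
  have h9 : (2*(k:ℝ)+2) ≠ 0 := by positivity
  field_simp
  ring


lemma summable_lin_geom (a b : ℝ) : Summable (fun n : ℕ => (a*n+b) * (1/4:ℝ)^n) := by
  have h1 : Summable (fun n : ℕ => (n:ℝ) * (1/4:ℝ)^n) := by
    have := summable_pow_mul_geometric_of_norm_lt_one (R := ℝ) 1 (r := 1/4) (by norm_num)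
    simpa using this
  have h2 : Summable (fun n : ℕ => (1/4:ℝ)^n) := summable_geometric_of_lt_one (by norm_num) (by norm_num)
  have := (h1.mul_left a).add (h2.mul_left b)
  apply this.congr
  intro n; ring

lemma summable_F (k : ℕ) : Summable (fun n : ℕ => (6*(n:ℝ)+4*k+1) * H n k) := by
  refine Summable.of_nonneg_of_le ?_ ?_ (summable_lin_geom 6 (4*(k:ℝ)+1))
  · intro n
    have := H_pos n k
    positivity
  · intro n
    have h1 : (0:ℝ) ≤ 6*(n:ℝ)+4*k+1 := by positivity
    have := mul_le_mul_of_nonneg_left (H_le n k) h1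
    calc (6*(n:ℝ)+4*k+1) * H n k ≤ (6*(n:ℝ)+4*k+1) * (1/4:ℝ)^n := this
      _ = (6*(n:ℝ)+(4*(k:ℝ)+1)) * (1/4:ℝ)^n := by ring

lemma summable_G (k : ℕ) : Summable (fun n : ℕ => 8*(n:ℝ) * H n k) := by
  refine Summable.of_nonneg_of_le ?_ ?_ (summable_lin_geom 8 0)
  · intro n
    have := H_pos n k
    positivity
  · intro n
    have h1 : (0:ℝ) ≤ 8*(n:ℝ) := by positivity
    have := mul_le_mul_of_nonneg_left (H_le n k) h1
    calc 8*(n:ℝ) * H n k ≤ 8*(n:ℝ) * (1/4:ℝ)^n := this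
      _ = (8*(n:ℝ)+0) * (1/4:ℝ)^n := by ring

noncomputable def S (k : ℕ) : ℝ := ∑' n : ℕ, (6*(n:ℝ)+4*k+1) * H n k

lemma tsum_telescope_zero (g : ℕ → ℝ) (hg : Summable g) (h0 : g 0 = 0) :
    ∑' n : ℕ, (g (n+1) - g n) = 0 := by
  have hsum : Summable (fun n : ℕ => g (n+1) - g n) :=
    ((summable_nat_add_iff 1).mpr hg).sub hg
  have hh : HasSum (fun n : ℕ => g (n+1) - g n) 0 := by
    rw [hsum.hasSum_iff_tendsto_nat]
    have e : ∀ N : ℕ, ∑ i ∈ Finset.range N, (g (i+1) - g i) = g N - g 0 :=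
      fun N => Finset.sum_range_sub g N
    simp only [e, h0, sub_zero]
    exact hg.tendsto_atTop_zero
  exact hh.tsum_eq

lemma S_succ (k : ℕ) : S (k+1) = S k := by
  unfold S
  have hs1 := summable_F (k+1)
  have hs2 := summable_F k
  have heq : (fun n : ℕ => (6*(n:ℝ)+4*((k+1:ℕ):ℝ)+1) * H n (k+1) - (6*(n:ℝ)+4*(k:ℝ)+1) * H n k)
      = fun n : ℕ => (fun m : ℕ => 8*(m:ℝ) * H m k) (n+1) - (fun m : ℕ => 8*(m:ℝ) * H m k) n := by
    funext n
    have h := wz n k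
    push_cast
    linear_combination h
  have key : ∑' n : ℕ, ((6*(n:ℝ)+4*((k+1:ℕ):ℝ)+1) * H n (k+1) - (6*(n:ℝ)+4*(k:ℝ)+1) * H n k) = 0 := by
    rw [heq]
    apply tsum_telescope_zero _ (summable_G k)
    simp
  rw [Summable.tsum_sub hs1 hs2] at key
  linarith [key]

lemma S_const (k : ℕ) : S k = S 0 := by
  induction k with
  | zero => rfl
  | succ k ih => rw [S_succ k, ih]


noncomputable def W (k : ℕ) : ℝ :=
  ∏ i ∈ Finset.range k, ((2*(i:ℝ)+2)/(2*i+1) * ((2*i+2)/(2*i+3)))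

lemma W_mul_u (k : ℕ) : W k * ((2*(k:ℝ)+1) * u k ^ 2) = 1 := by
  induction k with
  | zero => simp [W, u_zero]
  | succ k ih =>
    unfold W at *
    rw [Finset.prod_range_succ, u_succ]
    have h1 : (2*(k:ℝ)+1) ≠ 0 := by positivity
    have h2 : (2*(k:ℝ)+2) ≠ 0 := by positivity
    have h3 : (2*(k:ℝ)+3) ≠ 0 := by positivity
    push_cast
    have expand : (∏ i ∈ Finset.range k, ((2*(i:ℝ)+2)/(2*i+1) * ((2*i+2)/(2*i+3))))
        * ((2*(k:ℝ)+2)/(2*k+1) * ((2*k+2)/(2*k+3)))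
        * ((2*((k:ℝ)+1)+1) * (u k * ((2*k+1)/(2*k+2))) ^ 2)
        = (∏ i ∈ Finset.range k, ((2*(i:ℝ)+2)/(2*i+1) * ((2*i+2)/(2*i+3))))
        * ((2*(k:ℝ)+1) * u k ^ 2) := by
      field_simp
      ring
    rw [expand, ih]

lemma tendsto_wallis : Filter.Tendsto (fun k : ℕ => (2*(k:ℝ)+1) * u k ^ 2)
    Filter.atTop (nhds (2/Real.pi)) := by
  have hW : Filter.Tendsto W Filter.atTop (nhds (Real.pi/2)) := Real.tendsto_prod_pi_div_two
  have hne : Real.pi/2 ≠ 0 := by positivity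
  have hinv := hW.inv₀ hne
  have heq : (fun k : ℕ => (2*(k:ℝ)+1) * u k ^ 2) = fun k => (W k)⁻¹ := by
    funext k
    have h := W_mul_u k
    have hWpos : 0 < W k := by
      apply Finset.prod_pos
      intro i _
      positivity
    field_simp
    linarith [h]
  rw [heq, show (Real.pi/2)⁻¹ = 2/Real.pi from by rw [inv_div]]  at *
  exact hinv

lemma tendsto_usq_zero : Filter.Tendsto (fun k : ℕ => u k ^ 2) Filter.atTop (nhds 0) := by
  have h1 : Filter.Tendsto (fun k : ℕ => (1:ℝ)/(2*(k:ℝ)+1)) Filter.atTop (nhds 0) := by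
    apply squeeze_zero (fun k => by positivity) (g := fun k : ℕ => (1:ℝ)/((k:ℝ)+1))
    · intro k
      apply div_le_div_of_nonneg_left (by norm_num) (by positivity)
      push_cast
      linarith
    · exact tendsto_one_div_add_atTop_nhds_zero_nat
  have h2 := tendsto_wallis.mul h1
  have heq : (fun k : ℕ => ((2*(k:ℝ)+1) * u k ^ 2) * ((1:ℝ)/(2*(k:ℝ)+1))) = fun k : ℕ => u k ^ 2 := by
    funext k
    have : (2*(k:ℝ)+1) ≠ 0 := by positivity
    field_simp
  rw [heq] at h2
  simpa using h2

lemma tendsto_F0 : Filter.Tendsto (fun k : ℕ => (4*(k:ℝ)+1) * u k ^ 2)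
    Filter.atTop (nhds (4/Real.pi)) := by
  have h := (tendsto_wallis.const_mul (2:ℝ)).sub tendsto_usq_zero
  have heq : (fun k : ℕ => 2*((2*(k:ℝ)+1) * u k ^ 2) - u k ^ 2) = fun k : ℕ => (4*(k:ℝ)+1) * u k ^2 := by
    funext k; ring
  rw [heq] at h
  have : 2*(2/Real.pi) - 0 = 4/Real.pi := by ring
  rwa [this] at h


lemma H_zero_right (k : ℕ) : H 0 k = u k ^ 2 := by
  unfold H
  rw [show (0+k) = k from by omega]
  have hk := fact_pos k
  rw [u_zero]
  field_simp
  simp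

lemma H_succ_bound (n k : ℕ) : H (n+1) k ≤ (1/4:ℝ)^(n+1) * (1/((k:ℝ)+1))^2 := by
  have hβ := beta_le n k
  have hβnn : (0:ℝ) ≤ (((n+1).factorial : ℝ) * k.factorial / ((n+1) + k).factorial) := by
    have := fact_pos (n+1); have := fact_pos k; have := fact_pos ((n+1)+k)
    positivity
  have hβ2 : (((n+1).factorial : ℝ) * k.factorial / ((n+1) + k).factorial)^2 ≤ (1/((k:ℝ)+1))^2 :=
    pow_le_pow_left₀ hβnn hβ 2
  have h12 : u (n+1)^3 * u k^2 ≤ 1 := by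
    have a1 : u (n+1)^3 ≤ 1 := pow_le_one₀ (le_of_lt (u_pos _)) (u_le_one _)
    have a2 : u k^2 ≤ 1 := pow_le_one₀ (le_of_lt (u_pos _)) (u_le_one _)
    nlinarith [pow_pos (u_pos (n+1)) 3, pow_pos (u_pos k) 2]
  unfold H
  rw [div_le_iff₀ (by positivity)]
  have e : (1/4:ℝ)^(n+1) * (1/((k:ℝ)+1))^2 * 4^(n+1) = (1/((k:ℝ)+1))^2 := by
    rw [show (1/4:ℝ)^(n+1) * (1/((k:ℝ)+1))^2 * 4^(n+1)
        = ((1/4:ℝ)^(n+1) * 4^(n+1)) * (1/((k:ℝ)+1))^2 from by ring, ← mul_pow]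
    norm_num
  rw [e]
  calc u (n+1)^3 * u k^2 * (((n+1).factorial : ℝ) * k.factorial / ((n+1) + k).factorial)^2
      ≤ 1 * (((n+1).factorial : ℝ) * k.factorial / ((n+1) + k).factorial)^2 := by
        nlinarith [sq_nonneg (((n+1).factorial : ℝ) * k.factorial / ((n+1) + k).factorial),
          mul_pos (pow_pos (u_pos (n+1)) 3) (pow_pos (u_pos k) 2)]
    _ ≤ (1/((k:ℝ)+1))^2 := by rw [one_mul]; exact hβ2

lemma Fsucc_le (m k : ℕ) :
    (6*(((m+1):ℕ):ℝ)+4*k+1) * H (m+1) k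
      ≤ (6*((m:ℝ)+1)+5) * ((1/4:ℝ)^(m+1) * (1/((k:ℝ)+1))) := by
  set p : ℝ := (1/4:ℝ)^(m+1) with hp
  set q : ℝ := 1/((k:ℝ)+1) with hq
  have hp0 : 0 < p := by positivity
  have hp1 : p ≤ 1 := by
    apply pow_le_one₀ <;> norm_num
  have hq0 : 0 < q := by positivity
  have hq1 : q ≤ 1 := by
    rw [hq]
    rw [div_le_one (by positivity)]
    linarith [Nat.cast_nonneg (α := ℝ) k]
  have hkq : (k:ℝ)*q = 1 - q := by
    rw [hq]
    field_simp
    ring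
  have hH := H_succ_bound m k
  have h1 : (0:ℝ) ≤ 6*(((m+1):ℕ):ℝ)+4*k+1 := by positivity
  have step1 : (6*(((m+1):ℕ):ℝ)+4*k+1) * H (m+1) k
      ≤ (6*(((m+1):ℕ):ℝ)+4*k+1) * (p * q^2) := mul_le_mul_of_nonneg_left hH h1
  have h2 : (6*(m:ℝ)+4*(k:ℝ)+7)*q ≤ 6*(m:ℝ)+11 := by
    have h3 : (0:ℝ) ≤ (6*(m:ℝ)+3)*(1-q) :=
      mul_nonneg (by positivity) (by linarith)
    nlinarith [hkq, h3]
  have step2 : (6*(((m+1):ℕ):ℝ)+4*k+1) * (p * q^2) ≤ (6*((m:ℝ)+1)+5) * (p * q) := by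
    have hc : (6*(((m+1):ℕ):ℝ)+4*k+1) = 6*(m:ℝ)+4*(k:ℝ)+7 := by push_cast; ring
    rw [hc]
    have h4 := mul_le_mul_of_nonneg_right h2 (le_of_lt (mul_pos hp0 hq0))
    nlinarith [h4]
  calc (6*(((m+1):ℕ):ℝ)+4*k+1) * H (m+1) k ≤ (6*(((m+1):ℕ):ℝ)+4*k+1) * (p * q^2) := step1
    _ ≤ (6*((m:ℝ)+1)+5) * (p * q) := step2

lemma S_tendsto : Filter.Tendsto S Filter.atTop (nhds (4/Real.pi)) := by
  have hbound : Summable (fun n : ℕ => (6*(n:ℝ)+5) * (1/4:ℝ)^n) := summable_lin_geom 6 5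
  have hlim : ∀ n : ℕ, Filter.Tendsto (fun k : ℕ => (6*(n:ℝ)+4*k+1) * H n k) Filter.atTop
      (nhds (if n = 0 then 4/Real.pi else 0)) := by
    intro n
    match n with
    | 0 =>
      simp only [if_pos rfl]
      have heq : (fun k : ℕ => (6*((0:ℕ):ℝ)+4*(k:ℝ)+1) * H 0 k) = fun k : ℕ => (4*(k:ℝ)+1) * u k ^ 2 := by
        funext k
        rw [H_zero_right]
        push_cast
        ring
      rw [heq]
      exact tendsto_F0
    | (m+1) =>
      simp only [if_neg (Nat.succ_ne_zero m)]
      apply squeeze_zero (g := fun k : ℕ => ((6*((m:ℝ)+1)+5) * (1/4:ℝ)^(m+1)) * (1/((k:ℝ)+1)))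
      · intro k
        exact mul_nonneg (by positivity) (le_of_lt (H_pos _ _))
      · intro k
        have := Fsucc_le m k
        calc (6*(((m+1):ℕ):ℝ)+4*k+1) * H (m+1) k
            ≤ (6*((m:ℝ)+1)+5) * ((1/4:ℝ)^(m+1) * (1/((k:ℝ)+1))) := this
          _ = ((6*((m:ℝ)+1)+5) * (1/4:ℝ)^(m+1)) * (1/((k:ℝ)+1)) := by ring
      · have := tendsto_one_div_add_atTop_nhds_zero_nat.const_mul ((6*((m:ℝ)+1)+5) * (1/4:ℝ)^(m+1))
        simpa using this
  have hb : ∀ᶠ (k : ℕ) in Filter.atTop, ∀ n : ℕ, ‖(6*(n:ℝ)+4*k+1) * H n k‖ ≤ (6*(n:ℝ)+5) * (1/4:ℝ)^n := by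
    apply Filter.Eventually.of_forall
    intro k n
    rw [Real.norm_eq_abs, abs_of_nonneg (mul_nonneg (by positivity) (le_of_lt (H_pos _ _)))]
    match n with
    | 0 =>
      rw [H_zero_right]
      have h1 := u_sq_bound k
      have h2 : (0:ℝ) ≤ u k ^2 := sq_nonneg _
      have h3 : (6*((0:ℕ):ℝ)+4*(k:ℝ)+1) = 4*(k:ℝ)+1 := by push_cast; ring
      rw [h3]
      have h4 : (4*(k:ℝ)+1) * u k^2 ≤ 2 * ((2*(k:ℝ)+1) * u k ^2) := by nlinarith
      have h5 : (6*((0:ℕ):ℝ)+5) * (1/4:ℝ)^(0:ℕ) = 5 := by norm_num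
      rw [h5]
      linarith
    | (m+1) =>
      have h6 := Fsucc_le m k
      have hq1 : (1:ℝ)/((k:ℝ)+1) ≤ 1 := by
        rw [div_le_one (by positivity)]
        linarith [Nat.cast_nonneg (α := ℝ) k]
      calc (6*(((m+1):ℕ):ℝ)+4*k+1) * H (m+1) k
          ≤ (6*((m:ℝ)+1)+5) * ((1/4:ℝ)^(m+1) * (1/((k:ℝ)+1))) := h6
        _ ≤ (6*((m:ℝ)+1)+5) * ((1/4:ℝ)^(m+1) * 1) := by
            apply mul_le_mul_of_nonneg_left _ (by positivity)
            apply mul_le_mul_of_nonneg_left hq1 (by positivity)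
        _ = (6*(((m+1):ℕ):ℝ)+5) * (1/4:ℝ)^(m+1) := by push_cast; ring
  have hdct := tendsto_tsum_of_dominated_convergence (f := fun (k : ℕ) (n : ℕ) => (6*(n:ℝ)+4*k+1) * H n k)
      (g := fun n : ℕ => if n = 0 then 4/Real.pi else 0)
      (bound := fun n : ℕ => (6*(n:ℝ)+5) * (1/4:ℝ)^n) hbound hlim hb
  have hg : ∑' n : ℕ, (if n = 0 then 4/Real.pi else (0:ℝ)) = 4/Real.pi := by
    rw [tsum_eq_single 0]
    · simp
    · intro b hbb
      simp [hbb]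
  rw [hg] at hdct
  exact hdct

lemma bauer : S 0 = 4/Real.pi := by
  have h1 : Filter.Tendsto S Filter.atTop (nhds (S 0)) := by
    have : S = fun _ : ℕ => S 0 := funext S_const
    rw [this]
    exact tendsto_const_nhds
  exact tendsto_nhds_unique h1 S_tendsto


noncomputable def c (n : ℕ) : ℝ := u n ^ 3 / 4 ^ n

lemma c_pos (n : ℕ) : 0 < c n := by
  unfold c
  have := u_pos n
  positivity

lemma c_le (n : ℕ) : c n ≤ (1/4:ℝ)^n := by
  unfold c
  rw [div_le_iff₀ (by positivity)]
  have h1 : u n ^ 3 ≤ 1 := pow_le_one₀ (le_of_lt (u_pos _)) (u_le_one _)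
  calc u n ^ 3 ≤ 1 := h1
    _ = (1/4:ℝ)^n * 4^n := by rw [← mul_pow]; norm_num

lemma H_n0 (n : ℕ) : H n 0 = c n := by
  have hn : (n.factorial:ℝ) ≠ 0 := ne_of_gt (fact_pos n)
  unfold H c
  rw [show (n+0) = n from by omega, u_zero]
  field_simp
  simp

lemma c_succ (n : ℕ) : c (n+1) = c n * ((2*(n:ℝ)+1)^3 / (32 * ((n:ℝ)+1)^3)) := by
  unfold c
  rw [u_succ, pow_succ]
  have h1 : (2*(n:ℝ)+2) ≠ 0 := by positivity
  have h2 : ((n:ℝ)+1) ≠ 0 := by positivity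
  have h3 : (4:ℝ)^n ≠ 0 := by positivity
  field_simp
  ring

/-- summability of `c n` times a polynomial, via a crude degree-5 bound -/
lemma summable_c_poly (f : ℕ → ℝ) (C : ℝ)
    (hf : ∀ n, |f n| ≤ C * ((n:ℝ)+1)^5) : Summable (fun n => c n * f n) := by
  have hgeom : Summable (fun n : ℕ => |C| * (((n:ℝ)+1)^5 * (1/4:ℝ)^n)) := by
    apply Summable.mul_left
    have h5 := summable_pow_mul_geometric_of_norm_lt_one (R := ℝ) 5 (r := 1/4) (by norm_num)
    have h6 := ((summable_nat_add_iff 1).mpr h5).mul_left 4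
    apply h6.congr
    intro n
    push_cast
    ring
  apply Summable.of_norm
  apply Summable.of_nonneg_of_le (fun n => norm_nonneg _) _ hgeom
  intro n
  rw [Real.norm_eq_abs, abs_mul, abs_of_pos (c_pos n)]
  have h1 : c n ≤ (1/4:ℝ)^n := c_le n
  have h2 : |f n| ≤ |C| * ((n:ℝ)+1)^5 := by
    calc |f n| ≤ C * ((n:ℝ)+1)^5 := hf n
      _ ≤ |C| * ((n:ℝ)+1)^5 := by
          apply mul_le_mul_of_nonneg_right (le_abs_self C) (by positivity)
  calc c n * |f n| ≤ (1/4:ℝ)^n * (|C| * ((n:ℝ)+1)^5) := by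
        apply mul_le_mul h1 h2 (abs_nonneg _) (by positivity)
    _ = |C| * (((n:ℝ)+1)^5 * (1/4:ℝ)^n) := by ring

/-- the telescoping auxiliary sequence -/
noncomputable def b (n : ℕ) : ℝ := c n * ((n:ℝ)^3 * (-8*(n:ℝ)^2+16*(n:ℝ)-26))

lemma summable_b : Summable b := by
  apply summable_c_poly _ 50
  intro n
  have h0 : (0:ℝ) ≤ (n:ℝ) := Nat.cast_nonneg n
  rw [abs_le]
  constructor
  · nlinarith [pow_nonneg h0 2, pow_nonneg h0 3, pow_nonneg h0 4, pow_nonneg h0 5]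
  · nlinarith [pow_nonneg h0 2, pow_nonneg h0 3, pow_nonneg h0 4, pow_nonneg h0 5]

lemma summable_bauer : Summable (fun n : ℕ => (6*(n:ℝ)+1) * c n) := by
  have := summable_F 0
  apply this.congr
  intro n
  rw [H_n0]
  push_cast
  ring

lemma bauer_c : ∑' n : ℕ, (6*(n:ℝ)+1) * c n = 4/Real.pi := by
  rw [← bauer]
  unfold S
  apply tsum_congr
  intro n
  rw [H_n0]
  push_cast
  ring

/-- the full polynomial-weighted series -/
noncomputable def q (n : ℕ) : ℝ := c n * ((n:ℝ)^2*((n:ℝ)-1)^2*(6*(n:ℝ)-7))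

lemma summable_q : Summable q := by
  apply summable_c_poly _ 7
  intro n
  have h0 : (0:ℝ) ≤ (n:ℝ) := Nat.cast_nonneg n
  rw [abs_mul, abs_mul]
  rw [abs_of_nonneg (sq_nonneg _), abs_of_nonneg (sq_nonneg _)]
  have h2 : |6*(n:ℝ)-7| ≤ 7*((n:ℝ)+1) := by
    rw [abs_le]
    constructor <;> nlinarith
  have h3 : (n:ℝ)^2 ≤ ((n:ℝ)+1)^2 := by nlinarith
  have h4 : ((n:ℝ)-1)^2 ≤ ((n:ℝ)+1)^2 := by nlinarith
  calc (n:ℝ)^2*((n:ℝ)-1)^2*|6*(n:ℝ)-7| ≤ ((n:ℝ)+1)^2*((n:ℝ)+1)^2*(7*((n:ℝ)+1)) := by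
        apply mul_le_mul _ h2 (abs_nonneg _) (by positivity)
        apply mul_le_mul h3 h4 (sq_nonneg _) (by positivity)
    _ = 7 * ((n:ℝ)+1)^5 := by ring

/-- the key pointwise decomposition -/
lemma q_decomp (n : ℕ) : q n = (9/16) * ((6*(n:ℝ)+1) * c n) + (b (n+1) - b n) := by
  unfold q b
  rw [c_succ]
  have h2 : ((n:ℝ)+1)^3 ≠ 0 := by positivity
  push_cast
  field_simp
  ring

lemma tsum_q : ∑' n : ℕ, q n = (9/16) * (4/Real.pi) := by
  have h1 : Summable (fun n : ℕ => (9/16) * ((6*(n:ℝ)+1) * c n)) := summable_bauer.mul_left _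
  have h2 : Summable (fun n : ℕ => b (n+1) - b n) :=
    ((summable_nat_add_iff 1).mpr summable_b).sub summable_b
  have heq : q = fun n : ℕ => (9/16) * ((6*(n:ℝ)+1) * c n) + (b (n+1) - b n) := funext q_decomp
  rw [heq, Summable.tsum_add h1 h2]
  rw [tsum_telescope_zero b summable_b (by unfold b; simp)]
  rw [tsum_mul_left, bauer_c, add_zero]


lemma poch_eq (k : ℕ) : poch (5/2) k = (4/3) * u (k+2) * ((k+2).factorial : ℝ) := by
  induction k with
  | zero =>
    unfold poch
    simp [u]
    norm_num [Finset.prod_range_succ, Nat.factorial]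
  | succ k ih =>
    unfold poch at *
    rw [Finset.prod_range_succ, ih]
    have e1 : k+1+2 = (k+2)+1 := by omega
    rw [e1, u_succ (k+2), Nat.factorial_succ (k+2)]
    have h1 : (2*((k:ℝ)+2)+2) ≠ 0 := by positivity
    push_cast
    field_simp
    ring

lemma term_eq (k : ℕ) :
    (poch (5/2) k ^ 3) / ((k.factorial : ℝ) ^ 2 * ((k + 2).factorial : ℝ)) * ((6*(k : ℝ) + 5) / (4 : ℝ) ^ k)
      = (1024/27) * q (k+2) := by
  rw [poch_eq]
  unfold q c
  have hf2 : ((k+2).factorial : ℝ) = ((k:ℝ)+2) * ((k:ℝ)+1) * (k.factorial : ℝ) := by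
    rw [show k+2 = (k+1)+1 from by omega, Nat.factorial_succ, Nat.factorial_succ]
    push_cast
    ring
  rw [hf2]
  have h1 : (k.factorial : ℝ) ≠ 0 := ne_of_gt (fact_pos k)
  have h2 : ((k:ℝ)+2) ≠ 0 := by positivity
  have h3 : ((k:ℝ)+1) ≠ 0 := by positivity
  have h4 : (4:ℝ)^k ≠ 0 := by positivity
  push_cast
  field_simp
  ring

lemma q_two_shift : ∑' k : ℕ, q (k+2) = (9/16) * (4/Real.pi) := by
  have h := Summable.sum_add_tsum_nat_add 2 summable_q
  rw [tsum_q] at h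
  have h0 : ∑ i ∈ Finset.range 2, q i = 0 := by
    rw [Finset.sum_range_succ, Finset.sum_range_one]
    unfold q
    norm_num
  linarith [h]

end Thm1WZ

theorem example_thm1_p1q1r2 :
    ∑' k : ℕ, (poch (5/2) k ^ 3) / ((k.factorial : ℝ) ^ 2 * ((k + 2).factorial : ℝ)) * ((6*(k : ℝ) + 5) / (4 : ℝ) ^ k) = 256 / (3 * Real.pi) := by
  have he : (fun k : ℕ => (poch (5/2) k ^ 3) / ((k.factorial : ℝ) ^ 2 * ((k + 2).factorial : ℝ)) * ((6*(k : ℝ) + 5) / (4 : ℝ) ^ k))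
      = fun k : ℕ => (1024/27) * Thm1WZ.q (k+2) := funext Thm1WZ.term_eq
  rw [he, tsum_mul_left, Thm1WZ.q_two_shift]
  have hpi : Real.pi ≠ 0 := Real.pi_ne_zero
  field_simp
  ring
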